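/- A permutation ρ of {1,…,n} obtained from the identity by a TDRL operation with binary pattern b can itself produce the identity by a TDRL operation if and only if b has the form 1^r 0^s 1^t 0^u for nonnegative integers r, s, t, u with r+s+t+u = n. -/

import Mathlib

/-- The TDRL operation with binary pattern `b` applied to a sequence `l`:
concatenate the entries at positions where `b` is `true` (in order)
with the entries at positions where `b` is `false` (in order). -/
def tdrl (b : List Bool) (l : List ℕ) : List ℕ :=
  ((l.zip b).filter (fun p => p.2)).map Prod.fst ++
  ((l.zip b).filter (fun p => !p.2)).map Prod.fst

/-- The mirror-TDRL operation: kept entries of the original copy followed by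
kept entries of the reversed copy. -/
def mtdrl (b : List Bool) (l : List ℕ) : List ℕ :=
  ((l.zip b).filter (fun p => p.2)).map Prod.fst ++
  (((l.zip b).filter (fun p => !p.2)).map Prod.fst).reverse

/-- The identity permutation `(1, 2, …, n)` as a list. -/
def ident (n : ℕ) : List ℕ := List.range' 1 n

/-- `l` is a permutation of `{1, …, n}`. -/
def IsPermOf (n : ℕ) (l : List ℕ) : Prop := l.Perm (ident n)

/-- Permutations obtainable from `π` by one TDRL operation. -/
def SOut (π : List ℕ) : Set (List ℕ) :=
  {ρ | ∃ b : List Bool, b.length = π.length ∧ tdrl b π = ρ}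

/-- Permutations `ρ` from which `π` is obtainable by one TDRL operation. -/
def SIn (π : List ℕ) : Set (List ℕ) :=
  {ρ | ρ.Perm π ∧ ∃ b : List Bool, b.length = ρ.length ∧ tdrl b ρ = π}

/-- Permutations obtainable from `π` by one MTDRL operation. -/
def SMOut (π : List ℕ) : Set (List ℕ) :=
  {ρ | ∃ b : List Bool, b.length = π.length ∧ mtdrl b π = ρ}

/-- Permutations `ρ` from which `π` is obtainable by one MTDRL operation. -/
def SMIn (π : List ℕ) : Set (List ℕ) :=
  {ρ | ρ.Perm π ∧ ∃ b : List Bool, b.length = ρ.length ∧ mtdrl b ρ = π}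

/-- Permutations obtainable from `π` by one bounded TDRL operation of width `k`. -/
def SOutK (k : ℕ) (π : List ℕ) : Set (List ℕ) :=
  {ρ | ∃ i, ∃ b : List Bool, i + k ≤ π.length ∧ b.length = k ∧
    ρ = π.take i ++ tdrl b ((π.drop i).take k) ++ π.drop (i + k)}

/-- Permutations `ρ` from which `π` is obtainable by one bounded TDRL of width `k`. -/
def SInK (k : ℕ) (π : List ℕ) : Set (List ℕ) :=
  {ρ | ρ.Perm π ∧ ∃ i, ∃ b : List Bool, i + k ≤ ρ.length ∧ b.length = k ∧
    π = ρ.take i ++ tdrl b ((ρ.drop i).take k) ++ ρ.drop (i + k)}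

/-- Permutations obtainable from `π` by one bounded MTDRL operation of width `k`. -/
def SMOutK (k : ℕ) (π : List ℕ) : Set (List ℕ) :=
  {ρ | ∃ i, ∃ b : List Bool, i + k ≤ π.length ∧ b.length = k ∧
    ρ = π.take i ++ mtdrl b ((π.drop i).take k) ++ π.drop (i + k)}

/-- Permutations `ρ` from which `π` is obtainable by one bounded MTDRL of width `k`. -/
def SMInK (k : ℕ) (π : List ℕ) : Set (List ℕ) :=
  {ρ | ρ.Perm π ∧ ∃ i, ∃ b : List Bool, i + k ≤ ρ.length ∧ b.length = k ∧
    π = ρ.take i ++ mtdrl b ((ρ.drop i).take k) ++ ρ.drop (i + k)}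

namespace StmtAux

/-- kept entries -/
def tr (b : List Bool) (l : List ℕ) : List ℕ :=
  ((l.zip b).filter (fun p => p.2)).map Prod.fst

/-- dropped entries -/
def fa (b : List Bool) (l : List ℕ) : List ℕ :=
  ((l.zip b).filter (fun p => !p.2)).map Prod.fst

lemma tdrl_eq (b : List Bool) (l : List ℕ) : tdrl b l = tr b l ++ fa b l := rfl

lemma tr_append {b₁ : List Bool} {l₁ : List ℕ} (b₂ : List Bool) (l₂ : List ℕ)
    (h : l₁.length = b₁.length) :
    tr (b₁ ++ b₂) (l₁ ++ l₂) = tr b₁ l₁ ++ tr b₂ l₂ := by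
  simp [tr, List.zip_append h, List.filter_append]

lemma fa_append {b₁ : List Bool} {l₁ : List ℕ} (b₂ : List Bool) (l₂ : List ℕ)
    (h : l₁.length = b₁.length) :
    fa (b₁ ++ b₂) (l₁ ++ l₂) = fa b₁ l₁ ++ fa b₂ l₂ := by
  simp [fa, List.zip_append h, List.filter_append]

lemma tr_repl_true : ∀ l : List ℕ, tr (List.replicate l.length true) l = l := by
  intro l; induction l with
  | nil => rfl
  | cons a l ih => simpa [tr, List.replicate_succ] using ih

lemma tr_repl_false : ∀ l : List ℕ, tr (List.replicate l.length false) l = [] := by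
  intro l; induction l with
  | nil => rfl
  | cons a l ih => simpa [tr, List.replicate_succ] using ih

lemma fa_repl_true : ∀ l : List ℕ, fa (List.replicate l.length true) l = [] := by
  intro l; induction l with
  | nil => rfl
  | cons a l ih => simpa [fa, List.replicate_succ] using ih

lemma fa_repl_false : ∀ l : List ℕ, fa (List.replicate l.length false) l = l := by
  intro l; induction l with
  | nil => rfl
  | cons a l ih => simpa [fa, List.replicate_succ] using ih

lemma tr_blocks {r s t u : ℕ} (l1 l2 l3 l4 : List ℕ)
    (h1 : l1.length = r) (h2 : l2.length = s) (h3 : l3.length = t) (h4 : l4.length = u) :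
    tr (List.replicate r true ++ (List.replicate s false ++
        (List.replicate t true ++ List.replicate u false))) (l1 ++ (l2 ++ (l3 ++ l4)))
      = l1 ++ l3 := by
  subst h1 h2 h3 h4
  rw [tr_append _ _ (by simp), tr_append _ _ (by simp), tr_append _ _ (by simp),
    tr_repl_true, tr_repl_false, tr_repl_true, tr_repl_false]
  simp

lemma fa_blocks {r s t u : ℕ} (l1 l2 l3 l4 : List ℕ)
    (h1 : l1.length = r) (h2 : l2.length = s) (h3 : l3.length = t) (h4 : l4.length = u) :
    fa (List.replicate r true ++ (List.replicate s false ++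
        (List.replicate t true ++ List.replicate u false))) (l1 ++ (l2 ++ (l3 ++ l4)))
      = l2 ++ l4 := by
  subst h1 h2 h3 h4
  rw [fa_append _ _ (by simp), fa_append _ _ (by simp), fa_append _ _ (by simp),
    fa_repl_true, fa_repl_false, fa_repl_true, fa_repl_false]
  simp

lemma rapp {a b m k n : ℕ} (hb : b = a + m) (h : n = m + k) :
    List.range' a m ++ List.range' b k = List.range' a n := by
  subst hb h
  have := List.range'_append (s := a) (m := m) (n := k) (step := 1)
  simp only [one_mul] at this
  rw [this, Nat.add_comm]

lemma tdrl_perm (b : List Bool) (l : List ℕ) (h : b.length = l.length) :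
    (tdrl b l).Perm l := by
  have he : tdrl b l = ((l.zip b).filter (fun p => p.2) ++
      (l.zip b).filter (fun p => !p.2)).map Prod.fst := by
    simp [tdrl, tr, fa, List.map_append]
  rw [he]
  have h2 := (List.filter_append_perm (fun p : ℕ × Bool => p.2) (l.zip b)).map Prod.fst
  rwa [List.map_fst_zip (l₁ := l) (l₂ := b) h.ge] at h2

lemma tr_sublist (b : List Bool) (l : List ℕ) (h : b.length = l.length) :
    (tr b l).Sublist l := by
  have h1 := (List.filter_sublist (p := fun p : ℕ × Bool => p.2) (l := l.zip b)).map Prod.fst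
  rwa [List.map_fst_zip (l₁ := l) (l₂ := b) h.ge] at h1

lemma fa_sublist (b : List Bool) (l : List ℕ) (h : b.length = l.length) :
    (fa b l).Sublist l := by
  have h1 := (List.filter_sublist (p := fun p : ℕ × Bool => !p.2) (l := l.zip b)).map Prod.fst
  rwa [List.map_fst_zip (l₁ := l) (l₂ := b) h.ge] at h1

lemma idx_lt {a c : ℕ} : ∀ {l : List ℕ}, l.Nodup → [a, c].Sublist l →
    l.idxOf a < l.idxOf c := by
  intro l
  induction l with
  | nil => intro _ h; exact absurd (h.length_le) (by simp)
  | cons x l ih =>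
    intro hnd hs
    have hx : x ∉ l := (List.nodup_cons.mp hnd).1
    cases hs with
    | cons _ hs' =>
      have ha : a ∈ l := hs'.subset (by simp)
      have hc : c ∈ l := hs'.subset (by simp)
      rw [List.idxOf_cons_ne _ (by rintro rfl; exact hx ha),
        List.idxOf_cons_ne _ (by rintro rfl; exact hx hc)]
      exact Nat.succ_lt_succ (ih (List.nodup_cons.mp hnd).2 hs')
    | cons_cons _ hs' =>
      have hc : c ∈ l := hs'.subset (by simp)
      rw [List.idxOf_cons_self,
        List.idxOf_cons_ne _ (by rintro rfl; exact hx hc)]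
      exact Nat.succ_pos _

lemma pair_asymm {a c : ℕ} {l : List ℕ} (hnd : l.Nodup)
    (h1 : [a, c].Sublist l) (h2 : [c, a].Sublist l) : False :=
  absurd (idx_lt hnd h2) (Nat.not_lt.mpr (idx_lt hnd h1).le)

lemma pair_sublist_of_sorted {a c : ℕ} : ∀ {l : List ℕ}, l.Pairwise (· < ·) →
    a ∈ l → c ∈ l → a < c → [a, c].Sublist l := by
  intro l
  induction l with
  | nil => intro _ ha; exact absurd ha (by simp)
  | cons x l ih =>
    intro hp ha hc hac
    rcases List.mem_cons.mp ha with rfl | ha'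
    · have hc' : c ∈ l := by
        rcases List.mem_cons.mp hc with rfl | h
        · exact absurd hac (lt_irrefl _)
        · exact h
      exact (List.singleton_sublist.mpr hc').cons₂ a
    · have hc' : c ∈ l := by
        rcases List.mem_cons.mp hc with rfl | h
        · exact absurd ((List.pairwise_cons.mp hp).1 a ha') (by omega)
        · exact h
      exact (ih (List.pairwise_cons.mp hp).2 ha' hc' hac).cons x

lemma dichotomy : ∀ b : List Bool,
    (∃ r s t u : ℕ, b = List.replicate r true ++ List.replicate s false ++
        List.replicate t true ++ List.replicate u false) ∨
    (∃ i j k l : ℕ, i < j ∧ j < k ∧ k < l ∧ l < b.length ∧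
      b[i]? = some false ∧ b[j]? = some true ∧ b[k]? = some false ∧ b[l]? = some true) := by
  intro b
  induction b with
  | nil => exact Or.inl ⟨0, 0, 0, 0, rfl⟩
  | cons x b ih =>
    rcases ih with ⟨r, s, t, u, hform⟩ | ⟨i, j, k, l, hij, hjk, hkl, hl, hbi, hbj, hbk, hbl⟩
    · cases x with
      | true =>
        exact Or.inl ⟨r + 1, s, t, u, by
          rw [hform]; simp [List.replicate_succ]⟩
      | false =>
        rcases Nat.eq_zero_or_pos r with hr | hr
        · subst hr
          exact Or.inl ⟨0, s + 1, t, u, by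
            rw [hform]; simp [List.replicate_succ]⟩
        rcases Nat.eq_zero_or_pos t with ht | ht
        · subst ht
          refine Or.inl ⟨0, 1, r, s + u, ?_⟩
          rw [hform]
          simp only [List.replicate_add, List.replicate_zero, List.replicate_one,
            List.nil_append, List.append_nil, List.append_assoc, List.singleton_append,
            List.cons_append]
        rcases Nat.eq_zero_or_pos s with hs | hs
        · subst hs
          refine Or.inl ⟨0, 1, r + t, u, ?_⟩
          rw [hform]
          simp only [List.replicate_add, List.replicate_zero, List.replicate_one,
            List.nil_append, List.append_nil, List.append_assoc, List.singleton_append,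
            List.cons_append]
        · -- r, s, t ≥ 1 : pattern 0 1 0 1
          refine Or.inr ⟨0, 1, r + 1, r + s + 1, by omega, by omega, by omega, ?_, ?_, ?_, ?_, ?_⟩
          · rw [hform]; simp; omega
          · simp
          · rw [hform]
            obtain ⟨r', rfl⟩ : ∃ r', r = r' + 1 := ⟨r - 1, by omega⟩
            simp [List.replicate_succ]
          · rw [hform, List.getElem?_cons_succ, List.append_assoc, List.append_assoc,
              List.getElem?_append_right (by simp)]
            obtain ⟨s', rfl⟩ : ∃ s', s = s' + 1 := ⟨s - 1, by omega⟩
            simp [List.replicate_succ]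
          · rw [hform, List.getElem?_cons_succ, List.append_assoc, List.append_assoc,
              List.getElem?_append_right (by simp), List.length_replicate]
            have hidx : r + s - r = s := by omega
            rw [hidx, List.getElem?_append_right (by simp), List.length_replicate]
            obtain ⟨t', rfl⟩ : ∃ t', t = t' + 1 := ⟨t - 1, by omega⟩
            simp [List.replicate_succ]
    · exact Or.inr ⟨i + 1, j + 1, k + 1, l + 1, by omega, by omega, by omega, by simpa using hl,
        by simpa using hbi, by simpa using hbj, by simpa using hbk, by simpa using hbl⟩

lemma mem_tr_of_get {b : List Bool} {n i : ℕ} (hbn : b.length = n) (hi : i < n)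
    (h : b[i]? = some true) : (1 + i) ∈ tr b (ident n) := by
  have hzl : ((ident n).zip b).length = n := by simp [ident, hbn]
  have hiz : i < ((ident n).zip b).length := by omega
  have hb' : b[i] = true := by
    have := List.getElem?_eq_getElem (l := b) (i := i) (by omega)
    rw [h] at this; exact (Option.some_injective _ this.symm)
  have hz : ((ident n).zip b)[i] = (1 + i, true) := by
    rw [List.getElem_zip]
    simp [ident, List.getElem_range', hb']
  have hmem : (1 + i, true) ∈ (ident n).zip b := hz ▸ List.getElem_mem hiz
  exact List.mem_map.mpr ⟨(1 + i, true), List.mem_filter.mpr ⟨hmem, by simp⟩, rfl⟩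

lemma mem_fa_of_get {b : List Bool} {n i : ℕ} (hbn : b.length = n) (hi : i < n)
    (h : b[i]? = some false) : (1 + i) ∈ fa b (ident n) := by
  have hiz : i < ((ident n).zip b).length := by simp [ident, hbn]; omega
  have hb' : b[i] = false := by
    have := List.getElem?_eq_getElem (l := b) (i := i) (by omega)
    rw [h] at this; exact (Option.some_injective _ this.symm)
  have hz : ((ident n).zip b)[i] = (1 + i, false) := by
    rw [List.getElem_zip]
    simp [ident, List.getElem_range', hb']
  have hmem : (1 + i, false) ∈ (ident n).zip b := hz ▸ List.getElem_mem hiz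
  exact List.mem_map.mpr ⟨(1 + i, false), List.mem_filter.mpr ⟨hmem, by simp⟩, rfl⟩

end StmtAux

open StmtAux in
theorem stmt_6 (n : ℕ) (b : List Bool) (hb : b.length = n) :
    (∃ b' : List Bool, b'.length = n ∧ tdrl b' (tdrl b (ident n)) = ident n) ↔
      ∃ r s t u : ℕ, r + s + t + u = n ∧
        b = List.replicate r true ++ List.replicate s false ++
            List.replicate t true ++ List.replicate u false := by
  constructor
  · rintro ⟨b', hb'len, hb'⟩
    rcases dichotomy b with ⟨r, s, t, u, hform⟩ | ⟨i, j, k, l, hij, hjk, hkl, hl, hbi, hbj, hbk, hbl⟩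
    · refine ⟨r, s, t, u, ?_, hform⟩
      have := congrArg List.length hform
      rw [hb] at this; simp at this; omega
    · exfalso
      set ρ := tdrl b (ident n) with hρdef
      have hlen_id : (ident n).length = n := by simp [ident]
      have hperm : ρ.Perm (ident n) := tdrl_perm b _ (by rw [hb, hlen_id])
      have hρlen : ρ.length = n := hperm.length_eq.trans hlen_id
      have hρnd : ρ.Nodup := hperm.nodup_iff.mpr
        ((List.pairwise_lt_range' (s := 1) (n := n)).imp ne_of_lt)
      -- split of ident n forced by b'
      have hsum : (tr b' ρ).length + (fa b' ρ).length = n := by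
        have := congrArg List.length hb'
        rw [tdrl_eq] at this; simpa [hlen_id] using this
      set k0 := (tr b' ρ).length with hk0def
      have hk0 : k0 ≤ n := by omega
      have hsplit : tr b' ρ ++ fa b' ρ = List.range' 1 k0 ++ List.range' (1 + k0) (n - k0) := by
        rw [← tdrl_eq, hb', ident,
          ← rapp (a := 1) (b := 1 + k0) (m := k0) (k := n - k0) (n := n) rfl (by omega)]
      obtain ⟨hT, hF⟩ := List.append_inj hsplit (by simp [hk0def])
      have hb'ρ : b'.length = ρ.length := by rw [hb'len, hρlen]
      have hTs : List.range' 1 k0 |>.Sublist ρ := hT ▸ tr_sublist b' ρ hb'ρ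
      have hFs : List.range' (1 + k0) (n - k0) |>.Sublist ρ := hF ▸ fa_sublist b' ρ hb'ρ
      -- key pair splitting
      have split_pair : ∀ a c : ℕ, 1 ≤ a → a ≤ n → c ≤ n → a < c → [c, a].Sublist ρ →
          a ≤ k0 ∧ k0 < c := by
        intro a c ha han hcn hac hrev
        by_cases h1 : a ≤ k0
        · by_cases h2 : c ≤ k0
          · exfalso
            have hmem : [a, c].Sublist (List.range' 1 k0) :=
              pair_sublist_of_sorted (List.pairwise_lt_range' (s := 1) (n := k0))
                (List.mem_range'_1.mpr ⟨ha, by omega⟩)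
                (List.mem_range'_1.mpr ⟨by omega, by omega⟩) hac
            exact pair_asymm hρnd (hmem.trans hTs) hrev
          · exact ⟨h1, by omega⟩
        · exfalso
          have hmem : [a, c].Sublist (List.range' (1 + k0) (n - k0)) :=
            pair_sublist_of_sorted (List.pairwise_lt_range' (s := 1 + k0) (n := n - k0))
              (List.mem_range'_1.mpr ⟨by omega, by omega⟩)
              (List.mem_range'_1.mpr ⟨by omega, by omega⟩) hac
          exact pair_asymm hρnd (hmem.trans hFs) hrev
      -- the four values
      have hln : l < n := hb ▸ hl
      have hmj : (1 + j) ∈ tr b (ident n) := mem_tr_of_get hb (by omega) hbj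
      have hml : (1 + l) ∈ tr b (ident n) := mem_tr_of_get hb (by omega) hbl
      have hmi : (1 + i) ∈ fa b (ident n) := mem_fa_of_get hb (by omega) hbi
      have hmk : (1 + k) ∈ fa b (ident n) := mem_fa_of_get hb (by omega) hbk
      have hji : [1 + j, 1 + i].Sublist ρ := by
        rw [hρdef, tdrl_eq]
        exact List.Sublist.append (List.singleton_sublist.mpr hmj)
          (List.singleton_sublist.mpr hmi)
      have hlk : [1 + l, 1 + k].Sublist ρ := by
        rw [hρdef, tdrl_eq]
        exact List.Sublist.append (List.singleton_sublist.mpr hml)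
          (List.singleton_sublist.mpr hmk)
      obtain ⟨hA, hB⟩ := split_pair (1 + i) (1 + j) (by omega) (by omega) (by omega) (by omega) hji
      obtain ⟨hC, hD⟩ := split_pair (1 + k) (1 + l) (by omega) (by omega) (by omega) (by omega) hlk
      omega
  · rintro ⟨r, s, t, u, hsum, hform⟩
    set A1 := List.range' 1 r with hA1
    set A2 := List.range' (1 + r) s with hA2
    set A3 := List.range' (1 + r + s) t with hA3
    set A4 := List.range' (1 + r + s + t) u with hA4
    have l1 : A1.length = r := by simp [hA1]
    have l2 : A2.length = s := by simp [hA2]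
    have l3 : A3.length = t := by simp [hA3]
    have l4 : A4.length = u := by simp [hA4]
    have hident : ident n = A1 ++ (A2 ++ (A3 ++ A4)) := by
      rw [ident, hA1, hA2, hA3, hA4,
        rapp (a := 1 + r + s) (b := 1 + r + s + t) (m := t) (k := u) rfl rfl,
        rapp (a := 1 + r) (b := 1 + r + s) (m := s) (k := t + u) rfl rfl,
        rapp (a := 1) (b := 1 + r) (m := r) (k := s + (t + u)) (n := n) rfl (by omega)]
    have hform' : b = List.replicate r true ++ (List.replicate s false ++
        (List.replicate t true ++ List.replicate u false)) := by
      rw [hform]; simp [List.append_assoc]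
    have hρ : tdrl b (ident n) = A1 ++ (A3 ++ (A2 ++ A4)) := by
      rw [tdrl_eq, hform', hident, tr_blocks A1 A2 A3 A4 l1 l2 l3 l4,
        fa_blocks A1 A2 A3 A4 l1 l2 l3 l4]
      simp [List.append_assoc]
    refine ⟨List.replicate r true ++ (List.replicate t false ++
      (List.replicate s true ++ List.replicate u false)), by simp; omega, ?_⟩
    rw [hρ, tdrl_eq, tr_blocks A1 A3 A2 A4 l1 l3 l2 l4,
      fa_blocks A1 A3 A2 A4 l1 l3 l2 l4]
    rw [ident, hA1, hA2, hA3, hA4]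
    rw [List.append_assoc,
      rapp (a := 1 + r + s) (b := 1 + r + s + t) (m := t) (k := u) rfl rfl,
      rapp (a := 1 + r) (b := 1 + r + s) (m := s) (k := t + u) rfl rfl]
    exact rapp (a := 1) (b := 1 + r) (m := r) (k := s + (t + u)) (n := n) rfl (by omega)
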